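/- Let T be a rooted tree where each internal bag b is labeled with a set dom(b). Suppose we 'scrub' T bottom-up: remove from each bag b every element x such that x is not required at b (not used by an atom assigned to b) and x does not appear in any child of b. Then the result is still a tree decomposition (occurrences of each element still form connected subtrees), provided the original T was a tree decomposition and each atom was assigned to a bag containing all its variables. -/
import Mathlib


/-- Connectivity of a set of nodes of a rooted tree (given by a parent function): it is
empty, or it has a topmost element `t` such that every element reaches `t` by a
parent-chain staying inside the set. -/
def RConnected {ι : Type*} (par : ι → ι) (S : Set ι) : Prop :=
  S = ∅ ∨ ∃ t ∈ S, ∀ i ∈ S, ∃ n, par^[n] i = t ∧ ∀ m ≤ n, par^[m] i ∈ S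

/-- Scrubbing a tree decomposition (keeping an occurrence of `x` at bag `i` only when some
atom using `x` is assigned in the subtree rooted at `i`) preserves atom coverage and the
connectedness of element occurrences. -/
theorem scrubbing_preserves_decomposition {ι X A : Type*}
    (parent : ι → ι) (root : ι) (hroot : parent root = root)
    (hreach : ∀ i, ∃ n, parent^[n] i = root)
    (bags : ι → Set X)
    (hconn : ∀ x, RConnected parent {i | x ∈ bags i})
    (atomVars : A → Set X) (assign : A → ι)
    (hcov : ∀ a, atomVars a ⊆ bags (assign a)) :
    let bags' : ι → Set X := fun i =>
      {x ∈ bags i | ∃ a, x ∈ atomVars a ∧ ∃ n, parent^[n] (assign a) = i}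
    (∀ a, atomVars a ⊆ bags' (assign a)) ∧
    (∀ x, RConnected parent {i | x ∈ bags' i}) := by
  intro bags'
  constructor
  · intro a x hx
    exact ⟨hcov a hx, a, hx, 0, rfl⟩
  · intro x
    rcases hconn x with h | ⟨t, ht, hch⟩
    · left
      ext i
      simp only [Set.mem_setOf_eq, Set.mem_empty_iff_false, iff_false]
      intro hi
      have hmem : i ∈ ({j | x ∈ bags j} : Set ι) := hi.1
      rw [h] at hmem
      exact hmem
    · by_cases hS : {i | x ∈ bags' i} = ∅
      · exact Or.inl hS
      right
      rcases Set.nonempty_iff_ne_empty.mpr hS with ⟨i0, hi0⟩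
      obtain ⟨hi0b, a0, ha0, n0, hn0⟩ := hi0
      have hassign : assign a0 ∈ {j | x ∈ bags j} := hcov a0 ha0
      obtain ⟨N, hN, -⟩ := hch _ hassign
      refine ⟨t, ⟨ht, a0, ha0, N, hN⟩, ?_⟩
      intro i hi
      obtain ⟨hib, a, ha, n, hn⟩ := hi
      obtain ⟨k, hk, hkch⟩ := hch i hib
      refine ⟨k, hk, ?_⟩
      intro m hm
      refine ⟨hkch m hm, a, ha, m + n, ?_⟩
      rw [Function.iterate_add_apply, hn]
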